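/- Let k' ≥ 2, let S be an 𝔽_q-subspace of 𝔽_{q^n} with dim_{𝔽_q}(S) = k', let μ ∈ 𝔽_{q^n} ∖ 𝔽_q, let T = ⟨1, μ⟩_{𝔽_q}, let U = S × T, and let j = dim_{𝔽_q}(S ∩ μS). Then |L_U| = q^{k'+1} + q^{k'} − q^{j+1} + 1. Moreover: (i) if j = k', then S is an 𝔽_q(μ)-subspace and L_U = L_W where W = S × 𝔽_q(μ) is the 𝔽_q(μ)-span of U, and every point of L_U has weight greater than one; (ii) L_U has a point of weight one if and only if j ≤ k'−1; and (iii) |L_U| = q^{k'+1} + 1 if and only if j = k'−1. -/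

import Mathlib

open Submodule

/-- The span `⟨1, μ, …, μ^{m-1}⟩_{F_q}`. -/
noncomputable def pows (Fq : Type*) {Fqn : Type*} [Field Fq] [Field Fqn] [Algebra Fq Fqn]
    (μ : Fqn) (m : ℕ) : Submodule Fq Fqn :=
  Submodule.span Fq (Set.range fun i : Fin m => μ ^ (i : ℕ))

/-- Multiplication of a subspace by a scalar: `b · W`. -/
noncomputable def bmul (Fq : Type*) {Fqn : Type*} [Field Fq] [Field Fqn] [Algebra Fq Fqn]
    (b : Fqn) (W : Submodule Fq Fqn) : Submodule Fq Fqn :=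
  W.map (LinearMap.mulLeft Fq b)

/-- The `F_q`-linear set in `PG(1, q^n)` defined by an `F_q`-subspace `U` of `F_{q^n}²`:
the set of projective points `⟨v⟩_{F_{q^n}}`, `v ∈ U \ {0}`, viewed as
one-dimensional `F_{q^n}`-subspaces of `F_{q^n}²`. -/
def linSet {Fq Fqn : Type*} [Field Fq] [Field Fqn] [Algebra Fq Fqn]
    (U : Submodule Fq (Fqn × Fqn)) : Set (Submodule Fqn (Fqn × Fqn)) :=
  {P | ∃ v : Fqn × Fqn, v ≠ 0 ∧ v ∈ U ∧ P = Submodule.span Fqn {v}}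

/-- The weight of a projective point `P` in the linear set defined by `U`:
`w_{L_U}(P) = dim_{F_q}(U ∩ P)`. -/
noncomputable def weight {Fq Fqn : Type*} [Field Fq] [Field Fqn] [Algebra Fq Fqn]
    (U : Submodule Fq (Fqn × Fqn)) (P : Submodule Fqn (Fqn × Fqn)) : ℕ :=
  Module.finrank Fq ↥(U ⊓ P.restrictScalars Fq)


open LinearMap

namespace Stmt6Aux
variable {Fq Fqn : Type*} [Field Fq] [Field Fqn] [Algebra Fq Fqn]

/-- `s ↦ (s, m·s)`. -/
noncomputable def phi (Fq : Type*) {Fqn : Type*} [Field Fq] [Field Fqn] [Algebra Fq Fqn]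
    (m : Fqn) : Fqn →ₗ[Fq] Fqn × Fqn :=
  LinearMap.prod LinearMap.id (LinearMap.mulLeft Fq m)

lemma phi_apply (m s : Fqn) : phi Fq m s = (s, m * s) := rfl

lemma phi_inj (m : Fqn) : Function.Injective (phi Fq m) := fun a b h => congrArg Prod.fst h

/-- `t ↦ (0, t)`. -/
noncomputable def psi (Fq : Type*) {Fqn : Type*} [Field Fq] [Field Fqn] [Algebra Fq Fqn] :
    Fqn →ₗ[Fq] Fqn × Fqn :=
  LinearMap.prod 0 LinearMap.id

lemma psi_apply (t : Fqn) : psi Fq t = ((0:Fqn), t) := by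
  simp [psi]

lemma psi_inj : Function.Injective (psi (Fqn := Fqn) Fq) := fun a b h => congrArg Prod.snd h

lemma inf_span_fin (S T : Submodule Fq Fqn) (m : Fqn) :
    (S.prod T) ⊓ (span Fqn {((1:Fqn), m)}).restrictScalars Fq
      = (S ⊓ T.comap (LinearMap.mulLeft Fq m)).map (phi Fq m) := by
  ext x
  obtain ⟨x1, x2⟩ := x
  simp only [Submodule.mem_inf, Submodule.mem_prod, restrictScalars_mem,
    Submodule.mem_span_singleton, Submodule.mem_map, mem_comap, phi_apply, Prod.smul_mk,
    smul_eq_mul, mul_one, Prod.mk.injEq]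
  constructor
  · rintro ⟨⟨h1, h2⟩, c, hc, hcm⟩
    subst hc
    exact ⟨c, ⟨h1, show m * c ∈ T by rwa [mul_comm m c, hcm]⟩, rfl, by rw [mul_comm, hcm]⟩
  · rintro ⟨s, ⟨hs1, hs2⟩, rfl, rfl⟩
    exact ⟨⟨hs1, hs2⟩, s, rfl, mul_comm s m⟩

lemma inf_span_inf (S T : Submodule Fq Fqn) :
    (S.prod T) ⊓ (span Fqn {((0:Fqn), (1:Fqn))}).restrictScalars Fq
      = T.map (psi Fq) := by
  ext x
  obtain ⟨x1, x2⟩ := x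
  simp only [Submodule.mem_inf, Submodule.mem_prod, restrictScalars_mem,
    Submodule.mem_span_singleton, Submodule.mem_map, Prod.smul_mk, smul_eq_mul, mul_one,
    mul_zero, Prod.mk.injEq, psi_apply]
  constructor
  · rintro ⟨⟨h1, h2⟩, a, h0, h2'⟩
    exact ⟨x2, h2, h0, rfl⟩
  · rintro ⟨y, hy, h0, h2⟩
    subst h2
    exact ⟨⟨h0 ▸ S.zero_mem, hy⟩, y, h0, rfl⟩


section Card
variable [Fintype Fq] {M : Type*} [AddCommGroup M] [Module Fq M]

lemma two_le_card : 2 ≤ Fintype.card Fq := Fintype.one_lt_card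

lemma finite_submodule (V : Submodule Fq M) [FiniteDimensional Fq ↥V] :
    (V : Set M).Finite := by
  have : Finite ↥V := Module.finite_of_finite Fq
  exact Set.toFinite _

lemma ncard_submodule (V : Submodule Fq M) [FiniteDimensional Fq ↥V] :
    Set.ncard (V : Set M) = Fintype.card Fq ^ Module.finrank Fq ↥V := by
  have : Finite ↥V := Module.finite_of_finite Fq
  have f : Fintype ↥V := Fintype.ofFinite _
  rw [← Nat.card_coe_set_eq, Nat.card_eq_fintype_card]
  exact Module.card_eq_pow_finrank

lemma ncard_submodule_diff (V : Submodule Fq M) [FiniteDimensional Fq ↥V] :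
    Set.ncard ((V : Set M) \ {0}) + 1 = Fintype.card Fq ^ Module.finrank Fq ↥V := by
  rw [← ncard_submodule V]
  exact Set.ncard_diff_singleton_add_one V.zero_mem (finite_submodule V)

end Card

section Mul
variable (Fq)

/-- Multiplication by a nonzero scalar as an `Fq`-linear equivalence. -/
noncomputable def mule (m : Fqn) (hm : m ≠ 0) : Fqn ≃ₗ[Fq] Fqn :=
  LinearEquiv.ofLinear (LinearMap.mulLeft Fq m) (LinearMap.mulLeft Fq m⁻¹)
    (by ext x; simp [mul_inv_cancel_left₀ hm])
    (by ext x; simp [inv_mul_cancel_left₀ hm])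

lemma bmul_eq_map_mule {m : Fqn} (hm : m ≠ 0) (W : Submodule Fq Fqn) :
    bmul Fq m W = W.map (mule Fq m hm : Fqn →ₗ[Fq] Fqn) := rfl

lemma finrank_bmul {m : Fqn} (hm : m ≠ 0) (W : Submodule Fq Fqn) :
    Module.finrank Fq ↥(bmul Fq m W) = Module.finrank Fq ↥W := by
  rw [bmul_eq_map_mule Fq hm]
  exact LinearEquiv.finrank_map_eq _ _

lemma comap_mulLeft_eq {m : Fqn} (hm : m ≠ 0) (T : Submodule Fq Fqn) :
    T.comap (LinearMap.mulLeft Fq m) = bmul Fq m⁻¹ T := by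
  ext x
  simp only [mem_comap, LinearMap.mulLeft_apply, bmul, Submodule.mem_map]
  constructor
  · intro h
    exact ⟨m * x, h, by simp [inv_mul_cancel_left₀ hm]⟩
  · rintro ⟨t, ht, rfl⟩
    simpa [mul_inv_cancel_left₀ hm] using ht

end Mul

section Pair
variable [Fintype Fq] {M : Type*} [AddCommGroup M] [Module Fq M]

lemma two_le_finrank_of_pair {V : Submodule Fq M} [FiniteDimensional Fq ↥V] {x y : M}
    (hx : x ∈ V) (hy : y ∈ V) (h : LinearIndependent Fq ![x, y]) :
    2 ≤ Module.finrank Fq ↥V := by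
  have h1 : Submodule.span Fq (Set.range ![x, y]) ≤ V := by
    rw [Submodule.span_le]
    exact Set.range_subset_iff.mpr (fun i => by fin_cases i <;> simpa)
  have h2 := finrank_span_eq_card (R := Fq) h
  simpa [h2] using Submodule.finrank_mono h1

end Pair

section T
variable {μ : Fqn}

lemma mu_ne_zero (hμ : μ ∉ Set.range (algebraMap Fq Fqn)) : μ ≠ 0 :=
  fun h => hμ ⟨0, by simp [h]⟩

lemma indep_one_mu (hμ : μ ∉ Set.range (algebraMap Fq Fqn)) :
    LinearIndependent Fq ![(1 : Fqn), μ] := by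
  rw [linearIndependent_fin2]
  refine ⟨by simpa using mu_ne_zero hμ, fun a h => ?_⟩
  simp only [Matrix.cons_val_one, Matrix.head_cons, Matrix.cons_val_zero] at h
  have ha : a ≠ 0 := by
    rintro rfl
    simp at h
  refine hμ ⟨a⁻¹, ?_⟩
  have h2 : μ = a⁻¹ • (1 : Fqn) := by
    rw [← h, smul_smul, inv_mul_cancel₀ ha, one_smul]
  rw [h2, Algebra.smul_def, mul_one, map_inv₀]

lemma pows_two_eq : pows Fq μ 2 = Submodule.span Fq {(1 : Fqn), μ} := by
  unfold pows
  congr 1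
  ext x
  constructor
  · rintro ⟨i, rfl⟩
    fin_cases i <;> simp
  · rintro (rfl | rfl)
    exacts [⟨0, by simp⟩, ⟨1, by simp⟩]

lemma one_mem_T : (1 : Fqn) ∈ pows Fq μ 2 := by
  rw [pows_two_eq]
  exact Submodule.subset_span (by simp)

lemma mu_mem_T : μ ∈ pows Fq μ 2 := by
  rw [pows_two_eq]
  exact Submodule.subset_span (by simp)

lemma fd_T : FiniteDimensional Fq ↥(pows Fq μ 2) := by
  rw [pows_two_eq]
  exact FiniteDimensional.span_of_finite Fq (Set.toFinite _)

lemma finrank_T (hμ : μ ∉ Set.range (algebraMap Fq Fqn)) :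
    Module.finrank Fq ↥(pows Fq μ 2) = 2 := by
  have hr : pows Fq μ 2 = Submodule.span Fq (Set.range ![(1 : Fqn), μ]) := by
    rw [pows_two_eq]
    congr 1
    ext x
    constructor
    · rintro (rfl | rfl)
      exacts [⟨0, by simp⟩, ⟨1, by simp⟩]
    · rintro ⟨i, rfl⟩
      fin_cases i <;> simp
  rw [hr, finrank_span_eq_card (indep_one_mu hμ)]
  simp

lemma mem_T_iff {x : Fqn} : x ∈ pows Fq μ 2 ↔ ∃ a b : Fq, a • (1 : Fqn) + b • μ = x := by
  rw [pows_two_eq]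
  exact Submodule.mem_span_pair

end T

section LinSet
variable (S T : Submodule Fq Fqn)

/-- The finite slopes of the linear set. -/
def M0 : Set Fqn := {m | ∃ s ∈ S, s ≠ 0 ∧ m * s ∈ T}

lemma linSet_prod_eq (h1 : (1 : Fqn) ∈ T) (hS0 : ∃ s ∈ S, s ≠ (0 : Fqn)) :
    linSet (S.prod T) = insert (Submodule.span Fqn {((0 : Fqn), (1 : Fqn))})
      ((fun m => Submodule.span Fqn {((1 : Fqn), m)}) '' M0 S T) := by
  ext P
  simp only [linSet, Set.mem_setOf_eq, Set.mem_insert_iff, Set.mem_image]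
  constructor
  · rintro ⟨⟨v1, v2⟩, hv0, hmem, rfl⟩
    rw [Submodule.mem_prod] at hmem
    by_cases h : v1 = 0
    · left
      subst h
      have hv2 : v2 ≠ 0 := by simpa [Prod.ext_iff] using hv0
      have he : ((0 : Fqn), v2) = v2 • ((0 : Fqn), (1 : Fqn)) := by simp
      rw [he, Submodule.span_singleton_smul_eq (isUnit_iff_ne_zero.mpr hv2) _]
    · right
      refine ⟨v2 * v1⁻¹, ⟨v1, hmem.1, h, by rw [mul_assoc, inv_mul_cancel₀ h, mul_one]; exact hmem.2⟩, ?_⟩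
      have he : (v1, v2) = v1 • ((1 : Fqn), v2 * v1⁻¹) := by
        simp [Prod.ext_iff, mul_comm v1, mul_assoc, inv_mul_cancel₀ h]
      rw [he, Submodule.span_singleton_smul_eq (isUnit_iff_ne_zero.mpr h) _]
  · rintro (rfl | ⟨m, ⟨s, hsS, hs0, hms⟩, rfl⟩)
    · exact ⟨((0 : Fqn), 1), by simp [Prod.ext_iff],
        Submodule.mem_prod.mpr ⟨S.zero_mem, h1⟩, rfl⟩
    · refine ⟨(s, m * s), by simp [Prod.ext_iff, hs0],
        Submodule.mem_prod.mpr ⟨hsS, hms⟩, ?_⟩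
      have he : (s, m * s) = s • ((1 : Fqn), m) := by simp [Prod.ext_iff, mul_comm]
      rw [he, Submodule.span_singleton_smul_eq (isUnit_iff_ne_zero.mpr hs0) _]

lemma Pinf_ne (m : Fqn) :
    Submodule.span Fqn {((0 : Fqn), (1 : Fqn))} ≠ Submodule.span Fqn {((1 : Fqn), m)} := by
  intro h
  have hm : ((1 : Fqn), m) ∈ Submodule.span Fqn {((0 : Fqn), (1 : Fqn))} :=
    h ▸ Submodule.mem_span_singleton_self _
  obtain ⟨c, hc⟩ := Submodule.mem_span_singleton.mp hm
  simpa using congrArg Prod.fst hc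

lemma Pm_inj : Function.Injective (fun m : Fqn => Submodule.span Fqn {((1 : Fqn), m)}) := by
  intro a b h
  simp only at h
  have hm : ((1 : Fqn), a) ∈ Submodule.span Fqn {((1 : Fqn), b)} :=
    h ▸ Submodule.mem_span_singleton_self _
  obtain ⟨c, hc⟩ := Submodule.mem_span_singleton.mp hm
  have h1 : c = 1 := by simpa using congrArg Prod.fst hc
  have h2 := congrArg Prod.snd hc
  simp only [Prod.smul_snd, smul_eq_mul, h1, one_mul] at h2
  exact h2.symm

lemma ncard_linSet (h1 : (1 : Fqn) ∈ T) (hS0 : ∃ s ∈ S, s ≠ (0 : Fqn))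
    (hfin : (M0 S T).Finite) :
    (linSet (S.prod T)).ncard = 1 + (M0 S T).ncard := by
  rw [linSet_prod_eq S T h1 hS0,
    Set.ncard_insert_of_notMem (by rintro ⟨m, _, h⟩; exact Pinf_ne m h.symm) (hfin.image _),
    Set.ncard_image_of_injOn (Pm_inj.injOn), Nat.add_comm]

end LinSet

section Count
variable [Fintype Fq]

lemma count_main {μ : Fqn} (hμ : μ ∉ Set.range (algebraMap Fq Fqn))
    (S : Submodule Fq Fqn) (k' j : ℕ) (hk' : 2 ≤ k')
    (hS : Module.finrank Fq ↥S = k')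
    (hj : j = Module.finrank Fq ↥(S ⊓ bmul Fq μ S)) :
    (linSet (S.prod (pows Fq μ 2))).ncard + Fintype.card Fq ^ (j + 1)
        = Fintype.card Fq ^ (k' + 1) + Fintype.card Fq ^ k' + 1 ∧
    (j + 1 ≤ k' → ∃ P ∈ linSet (S.prod (pows Fq μ 2)),
        weight (S.prod (pows Fq μ 2)) P = 1) := by
  classical
  set q := Fintype.card Fq with hqdef
  have hq2 : 2 ≤ q := two_le_card
  have hμ0 : μ ≠ 0 := mu_ne_zero hμ
  set T : Submodule Fq Fqn := pows Fq μ 2 with hTdef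
  haveI hTfd : FiniteDimensional Fq ↥T := fd_T
  haveI hSfd : FiniteDimensional Fq ↥S := FiniteDimensional.of_finrank_pos (by rw [hS]; omega)
  have h1T : (1 : Fqn) ∈ T := one_mem_T
  have hfrT : Module.finrank Fq ↥T = 2 := finrank_T hμ
  set D : Submodule Fq Fqn := S ⊓ bmul Fq μ S with hDdef
  haveI hDfd : FiniteDimensional Fq ↥D := Submodule.finiteDimensional_of_le inf_le_left
  have hjk : j ≤ k' := by rw [hj, ← hS]; exact Submodule.finrank_mono inf_le_left
  have hSne : S ≠ ⊥ := by
    intro h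
    rw [h, finrank_bot] at hS
    omega
  obtain ⟨s₀, hs₀S, hs₀⟩ := Submodule.exists_mem_ne_zero_of_ne_bot hSne
  have hS0 : ∃ s ∈ S, s ≠ (0 : Fqn) := ⟨s₀, hs₀S, hs₀⟩
  have hSfin : ((S : Set Fqn) \ {0}).Finite := (finite_submodule S).diff
  have hTfin : ((T : Set Fqn) \ {0}).Finite := (finite_submodule T).diff
  have hDfin : ((D : Set Fqn) \ {0}).Finite := (finite_submodule D).diff
  set st := ((S : Set Fqn) \ {0}).ncard with hstdef
  set tt := ((T : Set Fqn) \ {0}).ncard with httdef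
  set dt := ((D : Set Fqn) \ {0}).ncard with hdtdef
  have hst : st + 1 = q ^ k' := by rw [hstdef, ncard_submodule_diff, hS]
  have htt : tt + 1 = q ^ 2 := by rw [httdef, ncard_submodule_diff, hfrT]
  have hdt : dt + 1 = q ^ j := by rw [hdtdef, ncard_submodule_diff, ← hj]
  set w : Fqn → ℕ := fun m => Module.finrank Fq ↥(S ⊓ T.comap (LinearMap.mulLeft Fq m)) with hwdef
  have hwpos : ∀ m : Fqn, (∃ s ∈ S, s ≠ 0 ∧ m * s ∈ T) → 1 ≤ w m := by
    rintro m ⟨s, hsS, hs0, hmsT⟩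
    have hmem : s ∈ S ⊓ T.comap (LinearMap.mulLeft Fq m) :=
      Submodule.mem_inf.mpr ⟨hsS, Submodule.mem_comap.mpr (by simpa using hmsT)⟩
    have hx : (⟨s, hmem⟩ : ↥(S ⊓ T.comap (LinearMap.mulLeft Fq m))) ≠ 0 := by
      simp [Subtype.ext_iff, hs0]
    exact Module.finrank_pos_iff_exists_ne_zero.mpr ⟨_, hx⟩
  have hwle : ∀ m : Fqn, m ≠ 0 →
      w m ≤ 2 ∧ FiniteDimensional Fq ↥(T.comap (LinearMap.mulLeft Fq m)) ∧
        Module.finrank Fq ↥(T.comap (LinearMap.mulLeft Fq m)) = 2 := by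
    intro m hm
    have hC : T.comap (LinearMap.mulLeft Fq m) = bmul Fq m⁻¹ T := comap_mulLeft_eq Fq hm T
    have hCfr : Module.finrank Fq ↥(T.comap (LinearMap.mulLeft Fq m)) = 2 := by
      rw [hC, finrank_bmul Fq (inv_ne_zero hm), hfrT]
    haveI hCfd : FiniteDimensional Fq ↥(T.comap (LinearMap.mulLeft Fq m)) := by
      rw [hC, bmul]
      infer_instance
    refine ⟨?_, hCfd, hCfr⟩
    rw [← hCfr]
    exact Submodule.finrank_mono inf_le_right
  have hw2 : ∀ m : Fqn, m ≠ 0 → (w m = 2 ↔ m⁻¹ ∈ S ∧ μ * m⁻¹ ∈ S) := by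
    intro m hm
    obtain ⟨-, hCfd, hCfr⟩ := hwle m hm
    constructor
    · intro h2
      have heq : S ⊓ T.comap (LinearMap.mulLeft Fq m) = T.comap (LinearMap.mulLeft Fq m) := by
        haveI := hCfd
        exact Submodule.eq_of_le_of_finrank_eq inf_le_right (by rw [← hCfr] at h2; exact h2)
      have hCle : T.comap (LinearMap.mulLeft Fq m) ≤ S := by
        rw [← heq]
        exact inf_le_left
      constructor
      · refine hCle (Submodule.mem_comap.mpr ?_)
        simpa [mul_inv_cancel₀ hm] using h1T
      · refine hCle (Submodule.mem_comap.mpr ?_)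
        have : m * (μ * m⁻¹) = μ := by field_simp
        simpa [this] using mu_mem_T (Fq := Fq) (μ := μ)
    · rintro ⟨h1, h2⟩
      have hCle : T.comap (LinearMap.mulLeft Fq m) ≤ S := by
        intro x hx
        rw [Submodule.mem_comap, LinearMap.mulLeft_apply] at hx
        obtain ⟨a, b, hab⟩ := mem_T_iff.mp hx
        have hxe : x = m⁻¹ * (a • (1 : Fqn) + b • μ) := by
          rw [hab, inv_mul_cancel_left₀ hm]
        rw [hxe, mul_add, mul_smul_comm, mul_smul_comm, mul_one, mul_comm m⁻¹ μ]
        exact S.add_mem (S.smul_mem a h1) (S.smul_mem b h2)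
      show Module.finrank Fq ↥(S ⊓ T.comap (LinearMap.mulLeft Fq m)) = 2
      rw [inf_eq_right.mpr hCle]
      exact hCfr
  set M : Set Fqn := {m | m ≠ 0 ∧ ∃ s ∈ S, s ≠ 0 ∧ m * s ∈ T} with hMdef
  have hM0 : M0 S T = insert (0 : Fqn) M := by
    ext m
    simp only [M0, Set.mem_setOf_eq, Set.mem_insert_iff, hMdef]
    constructor
    · intro h
      by_cases hm : m = 0
      · exact Or.inl hm
      · exact Or.inr ⟨hm, h⟩
    · rintro (rfl | ⟨-, h⟩)
      · exact ⟨s₀, hs₀S, hs₀, by rw [zero_mul]; exact T.zero_mem⟩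
      · exact h
  set A : Finset (Fqn × Fqn) := hSfin.toFinset ×ˢ hTfin.toFinset with hAdef
  have hAcard : A.card = st * tt := by
    rw [hAdef, Finset.card_product, ← Set.ncard_eq_toFinset_card _ hSfin,
      ← Set.ncard_eq_toFinset_card _ hTfin]
  set g : Fqn × Fqn → Fqn := fun p => p.2 * p.1⁻¹ with hgdef
  set Mf : Finset Fqn := A.image g with hMfdef
  have hMf : ↑Mf = M := by
    ext m
    simp only [hMfdef, Finset.coe_image, Set.mem_image, Finset.mem_coe, hAdef,
      Finset.mem_product, Set.Finite.mem_toFinset, Set.mem_diff, Set.mem_singleton_iff,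
      SetLike.mem_coe, hMdef, Set.mem_setOf_eq, hgdef]
    constructor
    · rintro ⟨⟨s, t⟩, ⟨⟨hsS, hs0⟩, htT, ht0⟩, rfl⟩
      refine ⟨by simp [ht0, hs0], s, hsS, hs0, ?_⟩
      rw [mul_assoc, inv_mul_cancel₀ hs0, mul_one]
      exact htT
    · rintro ⟨hm, s, hsS, hs0, hms⟩
      exact ⟨(s, m * s), ⟨⟨hsS, hs0⟩, hms, mul_ne_zero hm hs0⟩, mul_inv_cancel_right₀ hs0 m⟩
  have hMfM : ∀ m ∈ Mf, m ∈ M := fun m hm => by rw [← hMf]; exact hm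
  have hfiber : ∀ m ∈ Mf, (A.filter (fun p => g p = m)).card + 1 = q ^ (w m) := by
    intro m hm
    obtain ⟨hm0, s1, hs1S, hs10, hms1⟩ := hMfM m hm
    have hVfin : ((↑(S ⊓ T.comap (LinearMap.mulLeft Fq m)) : Set Fqn) \ {0}).Finite :=
      (finite_submodule _).diff
    have hEq : A.filter (fun p => g p = m) = hVfin.toFinset.image (fun s => (s, m * s)) := by
      ext ⟨s, t⟩
      simp only [Finset.mem_filter, hAdef, Finset.mem_product, Set.Finite.mem_toFinset,
        Set.mem_diff, SetLike.mem_coe, Set.mem_singleton_iff, Finset.mem_image,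
        hgdef, Submodule.mem_inf, Submodule.mem_comap, LinearMap.mulLeft_apply,
        Prod.mk.injEq]
      constructor
      · rintro ⟨⟨⟨hsS, hs0⟩, htT, ht0⟩, hg⟩
        have hts : t = m * s := by
          rw [← hg, mul_assoc, inv_mul_cancel₀ hs0, mul_one]
        exact ⟨s, ⟨⟨hsS, by rw [← hts]; exact htT⟩, hs0⟩, rfl, hts.symm⟩
      · rintro ⟨x, ⟨⟨hxS, hxT⟩, hx0⟩, rfl, rfl⟩
        exact ⟨⟨⟨hxS, hx0⟩, hxT, mul_ne_zero hm0 hx0⟩, mul_inv_cancel_right₀ hx0 m⟩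
    rw [hEq, Finset.card_image_of_injective _ (fun a b h => congrArg Prod.fst h),
      ← Set.ncard_eq_toFinset_card _ hVfin]
    exact ncard_submodule_diff _
  have hsum : A.card = ∑ m ∈ Mf, (A.filter (fun p => g p = m)).card :=
    Finset.card_eq_sum_card_fiberwise (fun x hx => Finset.mem_image_of_mem g hx)
  obtain ⟨et, het⟩ : ∃ et : ℕ, et + 1 = q := ⟨q - 1, by omega⟩
  have hetpos : 0 < et := by omega
  set N2 := (Mf.filter (fun m => w m = 2)).card with hN2def
  set N1 := (Mf.filter (fun m => ¬ w m = 2)).card with hN1def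
  have hsum2 : ∑ m ∈ Mf.filter (fun m => w m = 2), (A.filter (fun p => g p = m)).card
      = N2 * tt := by
    rw [hN2def, ← smul_eq_mul, ← Finset.sum_const]
    refine Finset.sum_congr rfl ?_
    intro m hm
    rw [Finset.mem_filter] at hm
    have h1 := hfiber m hm.1
    rw [hm.2] at h1
    omega
  have hsum1 : ∑ m ∈ Mf.filter (fun m => ¬ w m = 2), (A.filter (fun p => g p = m)).card
      = N1 * et := by
    rw [hN1def, ← smul_eq_mul, ← Finset.sum_const]
    refine Finset.sum_congr rfl ?_
    intro m hm
    rw [Finset.mem_filter] at hm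
    obtain ⟨hm0, s1, hs1S, hs10, hms1⟩ := hMfM m hm.1
    have hw1 : w m = 1 := by
      have h1 := hwpos m ⟨s1, hs1S, hs10, hms1⟩
      have h2 := (hwle m hm0).1
      have h3 := hm.2
      omega
    have h1 := hfiber m hm.1
    rw [hw1, pow_one] at h1
    omega
  have key : st * tt = N2 * tt + N1 * et := by
    rw [← hAcard, hsum, ← hsum2, ← hsum1]
    exact (Finset.sum_filter_add_sum_filter_not _ _ _).symm
  have hN2dt : N2 = dt := by
    have hset : (↑(Mf.filter (fun m => w m = 2)) : Set Fqn)
        = (fun x => μ * x⁻¹) '' ((D : Set Fqn) \ {0}) := by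
      ext m
      simp only [Finset.coe_filter, Set.mem_setOf_eq, Set.mem_image, Set.mem_diff,
        SetLike.mem_coe, Set.mem_singleton_iff]
      constructor
      · rintro ⟨hmf, hw⟩
        obtain ⟨hm0, -⟩ := hMfM m hmf
        obtain ⟨h1, h2⟩ := (hw2 m hm0).mp hw
        refine ⟨μ * m⁻¹, ⟨⟨h2, ?_⟩, mul_ne_zero hμ0 (inv_ne_zero hm0)⟩, ?_⟩
        · exact ⟨m⁻¹, h1, rfl⟩
        · rw [mul_inv_rev, inv_inv, ← mul_assoc, mul_comm μ m, mul_assoc,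
            mul_inv_cancel₀ hμ0, mul_one]
      · rintro ⟨x, ⟨⟨hxS, hxB⟩, hx0⟩, rfl⟩
        obtain ⟨s', hs'S, hs'⟩ := hxB
        have hminv : (μ * x⁻¹)⁻¹ = μ⁻¹ * x := by
          rw [mul_inv_rev, inv_inv, mul_comm]
        have hm0 : μ * x⁻¹ ≠ 0 := mul_ne_zero hμ0 (inv_ne_zero hx0)
        have hinvS : (μ * x⁻¹)⁻¹ ∈ S := by
          rw [hminv]
          have : μ⁻¹ * x = s' := by
            rw [← hs']
            simp [LinearMap.mulLeft_apply, inv_mul_cancel_left₀ hμ0]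
          rw [this]
          exact hs'S
        have hw2' : w (μ * x⁻¹) = 2 := by
          rw [hw2 _ hm0]
          refine ⟨hinvS, ?_⟩
          have : μ * (μ * x⁻¹)⁻¹ = x := by
            rw [hminv, mul_inv_cancel_left₀ hμ0]
          rw [this]
          exact hxS
        refine ⟨?_, hw2'⟩
        rw [← Finset.mem_coe, hMf]
        refine ⟨hm0, (μ * x⁻¹)⁻¹, hinvS, inv_ne_zero hm0, ?_⟩
        rw [mul_inv_cancel₀ hm0]
        exact h1T
    have hcard := congrArg Set.ncard hset
    rw [Set.ncard_coe_finset] at hcard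
    rw [hN2def, hcard, Set.ncard_image_of_injOn ?_]
    intro x hx y hy hxy
    have : x⁻¹ = y⁻¹ := mul_left_cancel₀ hμ0 hxy
    exact inv_injective this
  obtain ⟨c, hc⟩ : ∃ c : ℕ, st = dt + c := by
    have hle : q ^ j ≤ q ^ k' := Nat.pow_le_pow_right (by omega) hjk
    exact ⟨st - dt, by omega⟩
  have hct : c * tt = N1 * et := by
    have h1 : dt * tt + c * tt = dt * tt + N1 * et := by
      rw [← add_mul, ← hc, key, hN2dt]
    exact Nat.add_left_cancel h1
  have htt' : tt = (q + 1) * et := by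
    have h1 : (q + 1) * et + 1 = q ^ 2 := by
      have h2 : (q + 1) * et + 1 = q * et + (et + 1) := by ring
      rw [h2, het, ← het]
      ring
    omega
  have hN1c : N1 = c * (q + 1) := by
    have h2 : (c * (q + 1)) * et = N1 * et := by
      rw [mul_assoc, ← htt', hct]
    exact (Nat.eq_of_mul_eq_mul_right hetpos h2).symm
  have hMfin : M.Finite := by
    rw [← hMf]
    exact Mf.finite_toSet
  have hM0fin : (M0 S T).Finite := by
    rw [hM0]
    exact hMfin.insert 0
  have h0M : (0 : Fqn) ∉ M := fun h => h.1 rfl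
  have hMcard : M.ncard = N2 + N1 := by
    rw [← hMf, Set.ncard_coe_finset, hN2def, hN1def,
      Finset.card_filter_add_card_filter_not]
  have hM0card : (M0 S T).ncard = 1 + (N2 + N1) := by
    rw [hM0, Set.ncard_insert_of_notMem h0M hMfin, hMcard]
    omega
  have hL : (linSet (S.prod T)).ncard = 1 + (1 + (N2 + N1)) := by
    rw [ncard_linSet S T h1T hS0 hM0fin, hM0card]
  constructor
  · rw [hL, hN1c, hN2dt]
    have e1 : q ^ (j + 1) = (dt + 1) * q := by rw [pow_succ, ← hdt]
    have e2 : q ^ (k' + 1) = ((dt + c) + 1) * q := by rw [pow_succ, ← hst, hc]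
    have e3 : q ^ k' = (dt + c) + 1 := by rw [← hst, hc]
    rw [e1, e2, e3]
    ring
  · intro hlt
    have hcpos : 1 ≤ c := by
      have h1 : q ^ j < q ^ k' := by
        have h0 : q ^ (j + 1) ≤ q ^ k' := Nat.pow_le_pow_right (by omega) hlt
        have h2 : 0 < q ^ j := Nat.pow_pos (show 0 < q by omega)
        rw [pow_succ] at h0
        exact lt_of_lt_of_le ((Nat.lt_mul_iff_one_lt_right h2).mpr (by omega)) h0
      rw [← hst, ← hdt] at h1
      omega
    have hN1pos : 0 < N1 := by
      rw [hN1c]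
      exact Nat.mul_pos hcpos (by omega)
    obtain ⟨m, hmMf⟩ := Finset.card_pos.mp (by rw [← hN1def]; exact hN1pos)
    rw [Finset.mem_filter] at hmMf
    obtain ⟨hmf, hwne⟩ := hmMf
    obtain ⟨hm0, s1, hs1S, hs10, hms1⟩ := hMfM m hmf
    have hw1 : w m = 1 := by
      have h1 := hwpos m ⟨s1, hs1S, hs10, hms1⟩
      have h2 := (hwle m hm0).1
      omega
    refine ⟨Submodule.span Fqn {((1 : Fqn), m)}, ?_, ?_⟩
    · rw [linSet_prod_eq S T h1T hS0]
      exact Set.mem_insert_iff.mpr (Or.inr ⟨m, ⟨s1, hs1S, hs10, hms1⟩, rfl⟩)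
    · show Module.finrank Fq ↥(S.prod T ⊓ _) = 1
      rw [inf_span_fin S T m]
      exact ((Submodule.equivMapOfInjective (phi Fq m) (phi_inj m) _).finrank_eq.symm).trans hw1

end Count

section Degenerate
variable [Fintype Fq]

lemma smul_mu_ne_one' {μ : Fqn} (hμ : μ ∉ Set.range (algebraMap Fq Fqn)) (a : Fq) :
    a • μ ≠ (1 : Fqn) := by
  intro h
  have ha : a ≠ 0 := by
    rintro rfl
    simp at h
  refine hμ ⟨a⁻¹, ?_⟩
  have h2 : μ = a⁻¹ • (1 : Fqn) := by
    rw [← h, smul_smul, inv_mul_cancel₀ ha, one_smul]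
  rw [h2, Algebra.smul_def, mul_one, map_inv₀]

lemma degenerate {μ : Fqn} (hμ : μ ∉ Set.range (algebraMap Fq Fqn))
    (S : Submodule Fq Fqn) (k' : ℕ) (hk' : 2 ≤ k')
    (hS : Module.finrank Fq ↥S = k')
    (hj : Module.finrank Fq ↥(S ⊓ bmul Fq μ S) = k') :
    (∀ α ∈ Algebra.adjoin Fq {μ}, ∀ s ∈ S, α * s ∈ S) ∧
    linSet (S.prod (pows Fq μ 2))
      = linSet (S.prod (Subalgebra.toSubmodule (Algebra.adjoin Fq {μ}))) ∧
    ∀ P ∈ linSet (S.prod (pows Fq μ 2)), 1 < weight (S.prod (pows Fq μ 2)) P := by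
  classical
  have hμ0 : μ ≠ 0 := mu_ne_zero hμ
  set T : Submodule Fq Fqn := pows Fq μ 2 with hTdef
  haveI hTfd : FiniteDimensional Fq ↥T := fd_T
  haveI hSfd : FiniteDimensional Fq ↥S := FiniteDimensional.of_finrank_pos (by rw [hS]; omega)
  have h1T : (1 : Fqn) ∈ T := one_mem_T
  have hμT : μ ∈ T := mu_mem_T
  have hSne : S ≠ ⊥ := by
    intro h
    rw [h, finrank_bot] at hS
    omega
  obtain ⟨s₀, hs₀S, hs₀⟩ := Submodule.exists_mem_ne_zero_of_ne_bot hSne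
  have hS0 : ∃ s ∈ S, s ≠ (0 : Fqn) := ⟨s₀, hs₀S, hs₀⟩
  -- μ S = S
  have h1 : S ⊓ bmul Fq μ S = S :=
    Submodule.eq_of_le_of_finrank_eq inf_le_left (hj.trans hS.symm)
  have hle : S ≤ bmul Fq μ S := inf_eq_left.mp h1
  haveI : FiniteDimensional Fq ↥(bmul Fq μ S) := by
    rw [bmul]
    infer_instance
  have hfr : Module.finrank Fq ↥(bmul Fq μ S) = k' := by
    rw [finrank_bmul Fq hμ0 S, hS]
  have heq : S = bmul Fq μ S :=
    Submodule.eq_of_le_of_finrank_eq hle (hS.trans hfr.symm)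
  have hmul : ∀ s ∈ S, μ * s ∈ S := by
    intro s hs
    have : μ * s ∈ bmul Fq μ S := ⟨s, hs, rfl⟩
    rwa [← heq] at this
  -- (a) stability under the adjoined algebra
  have hadj : ∀ α ∈ Algebra.adjoin Fq {μ}, ∀ s ∈ S, α * s ∈ S := by
    intro α hα
    induction hα using Algebra.adjoin_induction with
    | mem x hx =>
      intro s hs
      rcases hx with rfl
      exact hmul s hs
    | algebraMap r =>
      intro s hs
      rw [← Algebra.smul_def]
      exact S.smul_mem r hs
    | add x y hx hy ihx ihy =>
      intro s hs
      rw [add_mul]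
      exact S.add_mem (ihx s hs) (ihy s hs)
    | mul x y hx hy ihx ihy =>
      intro s hs
      rw [mul_assoc]
      exact ihx _ (ihy s hs)
  -- multiplication by a nonzero element of the adjoin is surjective on S
  have hsurj : ∀ α ∈ Algebra.adjoin Fq {μ}, α ≠ 0 → ∀ y ∈ S, ∃ x ∈ S, α * x = y := by
    intro α hα hα0 y hy
    haveI : Finite ↥S := Module.finite_of_finite Fq
    set f : ↥S → ↥S := fun x => ⟨α * ↑x, hadj α hα ↑x x.2⟩ with hfdef
    have hinj : Function.Injective f := by
      intro a b hab
      have : α * ↑a = α * ↑b := congrArg Subtype.val hab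
      exact Subtype.ext (mul_left_cancel₀ hα0 this)
    obtain ⟨x, hx⟩ := Finite.injective_iff_surjective.mp hinj ⟨y, hy⟩
    exact ⟨↑x, x.2, congrArg Subtype.val hx⟩
  have hTle : T ≤ Subalgebra.toSubmodule (Algebra.adjoin Fq {μ}) := by
    rw [hTdef, pows_two_eq, Submodule.span_le]
    rintro x (rfl | rfl)
    · exact Subalgebra.one_mem _
    · exact Algebra.subset_adjoin rfl
  refine ⟨hadj, ?_, ?_⟩
  · -- equality of linear sets
    apply Set.eq_of_subset_of_subset
    · rintro P ⟨v, hv0, hv, rfl⟩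
      rw [Submodule.mem_prod] at hv
      exact ⟨v, hv0, Submodule.mem_prod.mpr ⟨hv.1, hTle hv.2⟩, rfl⟩
    · rintro P ⟨⟨v1, v2⟩, hv0, hv, rfl⟩
      rw [Submodule.mem_prod] at hv
      obtain ⟨hv1, hv2⟩ := hv
      by_cases h2 : v2 = 0
      · subst h2
        exact ⟨(v1, 0), hv0, Submodule.mem_prod.mpr ⟨hv1, T.zero_mem⟩, rfl⟩
      · obtain ⟨x, hxS, hx⟩ := hsurj v2 hv2 h2 v1 hv1
        refine ⟨(x, 1), by simp [Prod.ext_iff], Submodule.mem_prod.mpr ⟨hxS, h1T⟩, ?_⟩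
        have he : (v1, v2) = v2 • ((x : Fqn), (1 : Fqn)) := by
          simp [Prod.ext_iff, hx.symm]
        rw [he, Submodule.span_singleton_smul_eq (isUnit_iff_ne_zero.mpr h2) _]
  · -- all weights exceed one
    intro P hP
    rw [linSet_prod_eq S T h1T hS0] at hP
    rcases hP with rfl | ⟨m, ⟨s1, hs1S, hs10, hms1⟩, rfl⟩
    · show 1 < Module.finrank Fq ↥(S.prod T ⊓ _)
      rw [inf_span_inf S T]
      rw [(Submodule.equivMapOfInjective (psi Fq) psi_inj T).finrank_eq.symm, finrank_T hμ]
      omega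
    · show 1 < Module.finrank Fq ↥(S.prod T ⊓ _)
      rw [inf_span_fin S T m]
      rw [(Submodule.equivMapOfInjective (phi Fq m) (phi_inj m) _).finrank_eq.symm]
      by_cases hm : m = 0
      · subst hm
        have hVS : S ⊓ T.comap (LinearMap.mulLeft Fq 0) = S := by
          rw [inf_eq_left]
          intro x hx
          rw [Submodule.mem_comap, LinearMap.mulLeft_apply, zero_mul]
          exact T.zero_mem
        rw [hVS, hS]
        omega
      · set t₀ : Fqn := m * s1 with ht₀def
        have ht₀0 : t₀ ≠ 0 := mul_ne_zero hm hs10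
        have ht₀adj : t₀ ∈ Algebra.adjoin Fq {μ} := hTle hms1
        obtain ⟨x, hxS, hx⟩ := hsurj t₀ ht₀adj ht₀0 s1 hs1S
        obtain ⟨y, hyS, hy⟩ := hsurj t₀ ht₀adj ht₀0 (μ * s1) (hmul s1 hs1S)
        have hmx : m * x = 1 := by
          have h3 : t₀ * (m * x) = t₀ * 1 := by
            rw [mul_one, ht₀def]
            rw [show m * s1 * (m * x) = m * (m * s1 * x) by ring, ← ht₀def, hx, ht₀def]
          exact mul_left_cancel₀ ht₀0 h3
        have hmy : m * y = μ := by
          have h3 : t₀ * (m * y) = t₀ * μ := by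
            rw [ht₀def, show m * s1 * (m * y) = m * (m * s1 * y) by ring, ← ht₀def, hy]
            ring
          exact mul_left_cancel₀ ht₀0 h3
        have hxV : x ∈ S ⊓ T.comap (LinearMap.mulLeft Fq m) :=
          Submodule.mem_inf.mpr ⟨hxS, Submodule.mem_comap.mpr (by simpa [hmx] using h1T)⟩
        have hyV : y ∈ S ⊓ T.comap (LinearMap.mulLeft Fq m) :=
          Submodule.mem_inf.mpr ⟨hyS, Submodule.mem_comap.mpr (by simpa [hmy] using hμT)⟩
        have hindep : LinearIndependent Fq ![x, y] := by
          rw [linearIndependent_fin2]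
          constructor
          · simp only [Matrix.cons_val_one, Matrix.head_cons, Matrix.cons_val_zero]
            intro h0
            rw [h0, mul_zero] at hmy
            exact hμ0 hmy.symm
          · intro a ha
            simp only [Matrix.cons_val_one, Matrix.head_cons, Matrix.cons_val_zero] at ha
            have h4 : m * (a • y) = m * x := by rw [ha]
            rw [mul_smul_comm, hmy, hmx] at h4
            exact smul_mu_ne_one' hμ a h4
        have := two_le_finrank_of_pair hxV hyV hindep
        omega

end Degenerate

end Stmt6Aux

/-- With `S` of dimension `k' ≥ 2`, `μ ∉ F_q`, `T = ⟨1, μ⟩_{F_q}`,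
`U = S × T` and `j = dim_{F_q}(S ∩ μS)`:
`|L_U| = q^{k'+1} + q^{k'} - q^{j+1} + 1` (stated additively to avoid truncated
subtraction); if `j = k'` then `S` is an `F_q(μ)`-subspace, `L_U = L_W` with
`W = S × F_q(μ)`, and every point of `L_U` has weight `> 1`; `L_U` has a point of
weight one iff `j ≤ k' - 1`; and `|L_U| = q^{k'+1} + 1` iff `j = k' - 1`. -/
theorem stmt6 (Fq Fqn : Type*) [Field Fq] [Field Fqn] [Algebra Fq Fqn] [Fintype Fq]
    (q n : ℕ) (hq : Fintype.card Fq = q) (hn : Module.finrank Fq Fqn = n)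
    (k' : ℕ) (hk' : 2 ≤ k')
    (S : Submodule Fq Fqn) (hS : Module.finrank Fq ↥S = k')
    (μ : Fqn) (hμ : μ ∉ Set.range (algebraMap Fq Fqn))
    (T : Submodule Fq Fqn) (hT : T = pows Fq μ 2)
    (U : Submodule Fq (Fqn × Fqn)) (hU : U = S.prod T)
    (j : ℕ) (hj : j = Module.finrank Fq ↥(S ⊓ bmul Fq μ S)) :
    Set.ncard (linSet U) + q ^ (j + 1) = q ^ (k' + 1) + q ^ k' + 1 ∧
    (j = k' →
      (∀ α ∈ Algebra.adjoin Fq {μ}, ∀ s ∈ S, α * s ∈ S) ∧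
      linSet U = linSet (S.prod (Subalgebra.toSubmodule (Algebra.adjoin Fq {μ}))) ∧
      ∀ P ∈ linSet U, 1 < weight U P) ∧
    ((∃ P ∈ linSet U, weight U P = 1) ↔ j + 1 ≤ k') ∧
    (Set.ncard (linSet U) = q ^ (k' + 1) + 1 ↔ j + 1 = k') := by
  subst hq hT hU
  haveI hSfd : FiniteDimensional Fq ↥S :=
    FiniteDimensional.of_finrank_pos (by rw [hS]; omega)
  have hq2 : 2 ≤ Fintype.card Fq := Stmt6Aux.two_le_card
  have hjk : j ≤ k' := by
    rw [hj, ← hS]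
    exact Submodule.finrank_mono inf_le_left
  obtain ⟨hcount, hexist⟩ := Stmt6Aux.count_main hμ S k' j hk' hS hj
  refine ⟨hcount, ?_, ⟨?_, hexist⟩, ?_⟩
  · intro hj'
    exact Stmt6Aux.degenerate hμ S k' hk' hS (by rw [← hj, hj'])
  · rintro ⟨P, hP, hw⟩
    by_contra hcon
    have hj' : j = k' := by omega
    have := (Stmt6Aux.degenerate hμ S k' hk' hS (by rw [← hj, hj'])).2.2 P hP
    omega
  · have hpow : j + 1 = k' ↔ Fintype.card Fq ^ (j + 1) = Fintype.card Fq ^ k' :=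
      ⟨fun h => by rw [h], fun h => Nat.pow_right_injective hq2 h⟩
    rw [hpow]
    set L := (linSet (S.prod (pows Fq μ 2))).ncard
    set a := Fintype.card Fq ^ (k' + 1)
    set b := Fintype.card Fq ^ k'
    set cc := Fintype.card Fq ^ (j + 1)
    omega
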